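/- For each n ∈ ℕ let p^{(n)} be a probability mass function on ℕ, let X₁, …, X_n be i.i.d. with ℙ(Xᵢ = j) = p^{(n)}_j, and let Z_n be the number of distinct values among X₁, …, X_n. Suppose that (1/2)·∑_j (p^{(n)}_j · n)² → λ for some λ ∈ [0, ∞) and that sup_j (p^{(n)}_j · n) → 0 as n → ∞. Then n − Z_n converges in distribution to a Poisson random variable with mean λ; equivalently, for every k ∈ ℕ, ℙ(n − Z_n = k) → e^{−λ} λ^k / k! as n → ∞. -/

import Mathlib

set_option linter.unusedSectionVars false

open MeasureTheory ProbabilityTheory Finset Filter Topology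
open scoped ENNReal

namespace PoiAux


variable {n : ℕ}

/-- ordered pairs `i < j` in `Fin n`. -/
def pairsF (n : ℕ) : Finset (Fin n × Fin n) := Finset.univ.filter fun e => e.1 < e.2

/-- colliding pairs of `f`. -/
def collOf (f : Fin n → ℕ) : Finset (Fin n × Fin n) :=
  (pairsF n).filter fun e => f e.1 = f e.2

def DOf (f : Fin n → ℕ) : ℕ := (collOf f).card

/-- repeated indices. -/
def ROf (f : Fin n → ℕ) : Finset (Fin n) :=
  Finset.univ.filter fun j => ∃ i, i < j ∧ f i = f j

def noTriple (f : Fin n → ℕ) : Prop :=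
  ∀ i j l : Fin n, i < j → j < l → f i = f j → f j = f l → False

lemma mem_collOf {f : Fin n → ℕ} {e : Fin n × Fin n} :
    e ∈ collOf f ↔ e.1 < e.2 ∧ f e.1 = f e.2 := by
  simp [collOf, pairsF]

lemma card_image_add_card_R (f : Fin n → ℕ) :
    (Finset.univ.image f).card + (ROf f).card = n := by
  classical
  set B : Finset (Fin n) := Finset.univ.filter fun j => ¬∃ i, i < j ∧ f i = f j with hB
  have himg : Finset.univ.image f = B.image f := by
    apply le_antisymm
    · intro v hv
      simp only [Finset.mem_image] at hv ⊢
      obtain ⟨i, _, hi⟩ := hv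
      -- take the minimal element of the fiber
      have hne : (Finset.univ.filter fun i => f i = v).Nonempty := ⟨i, by simp [hi]⟩
      obtain ⟨i₀, hi₀, hmin⟩ := (Finset.univ.filter fun i => f i = v).exists_min_image id hne
      simp only [Finset.mem_filter, Finset.mem_univ, true_and] at hi₀
      refine ⟨i₀, ?_, hi₀⟩
      simp only [hB, Finset.mem_filter, Finset.mem_univ, true_and]
      rintro ⟨i', hi', hfe⟩
      have := hmin i' (by simp [hfe, hi₀])
      exact absurd (lt_of_lt_of_le hi' this) (lt_irrefl _)
    · exact Finset.image_subset_image (Finset.subset_univ _)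
  have hinj : Set.InjOn f B := by
    intro x hx y hy hxy
    by_contra hne
    rcases lt_or_gt_of_ne hne with h | h
    · simp only [hB, Finset.coe_filter, Set.mem_setOf_eq, Finset.mem_univ, true_and] at hy
      exact hy ⟨x, h, hxy⟩
    · simp only [hB, Finset.coe_filter, Set.mem_setOf_eq, Finset.mem_univ, true_and] at hx
      exact hx ⟨y, h, hxy.symm⟩
  have h1 : (Finset.univ.image f).card = B.card := by
    rw [himg, Finset.card_image_of_injOn hinj]
  rw [h1]
  have := Finset.card_filter_add_card_filter_not
    (s := (Finset.univ : Finset (Fin n))) (p := fun j => ∃ i, i < j ∧ f i = f j)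
  simpa [ROf, hB, add_comm] using this

lemma DOf_eq_card_R {f : Fin n → ℕ} (h : noTriple f) : DOf f = (ROf f).card := by
  classical
  apply Finset.card_bij (fun e _ => e.2)
  · intro e he
    rw [mem_collOf] at he
    simp only [ROf, Finset.mem_filter, Finset.mem_univ, true_and]
    exact ⟨e.1, he.1, he.2⟩
  · intro e he e' he' hee
    rw [mem_collOf] at he he'
    have h2 : e.2 = e'.2 := hee
    by_contra hne
    have h1 : e.1 ≠ e'.1 := fun hc => hne (Prod.ext hc h2)
    rcases lt_or_gt_of_ne h1 with hlt | hlt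
    · exact h e.1 e'.1 e.2 hlt (h2 ▸ he'.1) (by rw [he.2, h2, he'.2]) (h2 ▸ he'.2)
    · exact h e'.1 e.1 e.2 hlt (he.1) (by rw [he'.2, ← h2, he.2]) he.2
  · intro j hj
    simp only [ROf, Finset.mem_filter, Finset.mem_univ, true_and] at hj
    obtain ⟨i, hij, hf⟩ := hj
    exact ⟨(i, j), by rw [mem_collOf]; exact ⟨hij, hf⟩, rfl⟩

lemma n_sub_Z_eq_DOf {f : Fin n → ℕ} (h : noTriple f) :
    n - (Finset.univ.image f).card = DOf f := by
  have h1 := card_image_add_card_R f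
  rw [DOf_eq_card_R h]
  omega











def touch (a b : Fin n) (e : Fin n × Fin n) : Prop :=
  e.1 = a ∨ e.1 = b ∨ e.2 = a ∨ e.2 = b

instance (a b : Fin n) (e : Fin n × Fin n) : Decidable (touch a b e) := by
  unfold touch; infer_instance

def DOutOf (a b : Fin n) (f : Fin n → ℕ) : ℕ :=
  ((collOf f).filter fun e => ¬ touch a b e).card

lemma card_pairsF : (pairsF n).card = n.choose 2 := by
  classical
  rw [Finset.card_eq_sum_card_fiberwise (f := Prod.snd) (t := Finset.univ) (fun x _ => mem_univ _)]
  have hfib : ∀ j : Fin n, ((pairsF n).filter fun e => e.2 = j).card = (j : ℕ) := by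
    intro j
    have : ((pairsF n).filter fun e => e.2 = j) = (Finset.Iio j).image fun i => (i, j) := by
      ext e
      simp only [pairsF, Finset.mem_filter, Finset.mem_univ, true_and, Finset.mem_image,
        Finset.mem_Iio]
      constructor
      · rintro ⟨h1, h2⟩; exact ⟨e.1, h2 ▸ h1, by rw [← h2]⟩
      · rintro ⟨i, hi, rfl⟩; exact ⟨hi, rfl⟩
    rw [this, Finset.card_image_of_injective _ (fun x y hxy => (Prod.mk.injEq _ _ _ _ ▸ hxy).1),
      Fin.card_Iio]
  rw [Finset.sum_congr rfl fun j _ => hfib j, Fin.sum_univ_eq_sum_range (fun i => i) n,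
    Finset.sum_range_id, Nat.choose_two_right]

lemma card_touch_le (a b : Fin n) :
    ((pairsF n).filter fun e => touch a b e).card ≤ 4 * n := by
  classical
  have hsub : ((pairsF n).filter fun e => touch a b e) ⊆
      ((Finset.univ.image fun x => (a, x)) ∪ (Finset.univ.image fun x => (x, a))) ∪
      ((Finset.univ.image fun x => (b, x)) ∪ (Finset.univ.image fun x => (x, b))) := by
    intro e he
    rw [Finset.mem_filter] at he
    simp only [Finset.mem_union, Finset.mem_image, Finset.mem_univ, true_and]
    rcases he.2 with h | h | h | h
    · exact Or.inl (Or.inl ⟨e.2, by rw [← h]⟩)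
    · exact Or.inr (Or.inl ⟨e.2, by rw [← h]⟩)
    · exact Or.inl (Or.inr ⟨e.1, by rw [← h]⟩)
    · exact Or.inr (Or.inr ⟨e.1, by rw [← h]⟩)
  calc ((pairsF n).filter fun e => touch a b e).card
      ≤ _ := Finset.card_le_card hsub
    _ ≤ 4 * n := by
        refine le_trans (Finset.card_union_le _ _) ?_
        have h1 := Finset.card_union_le (Finset.univ.image fun x : Fin n => (a, x))
          (Finset.univ.image fun x => (x, a))
        have h2 := Finset.card_union_le (Finset.univ.image fun x : Fin n => (b, x))
          (Finset.univ.image fun x => (x, b))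
        have hc : ∀ g : Fin n → Fin n × Fin n, (Finset.univ.image g).card ≤ n := fun g =>
          le_trans Finset.card_image_le (by simp)
        have c1 := hc fun x => (a, x)
        have c2 := hc fun x => (x, a)
        have c3 := hc fun x => (b, x)
        have c4 := hc fun x => (x, b)
        omega

lemma DOutOf_congr {a b : Fin n} {f g : Fin n → ℕ}
    (h : ∀ i, i ≠ a → i ≠ b → f i = g i) : DOutOf a b f = DOutOf a b g := by
  classical
  unfold DOutOf collOf
  rw [Finset.filter_filter, Finset.filter_filter]
  congr 1
  apply Finset.filter_congr
  intro e _
  constructor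
  · rintro ⟨h1, h2⟩
    refine ⟨?_, h2⟩
    rw [← h e.1 (fun hc => h2 (Or.inl hc)) (fun hc => h2 (Or.inr (Or.inl hc))),
      ← h e.2 (fun hc => h2 (Or.inr (Or.inr (Or.inl hc))))
        (fun hc => h2 (Or.inr (Or.inr (Or.inr hc))))]
    exact h1
  · rintro ⟨h1, h2⟩
    refine ⟨?_, h2⟩
    rw [h e.1 (fun hc => h2 (Or.inl hc)) (fun hc => h2 (Or.inr (Or.inl hc))),
      h e.2 (fun hc => h2 (Or.inr (Or.inr (Or.inl hc))))
        (fun hc => h2 (Or.inr (Or.inr (Or.inr hc))))]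
    exact h1

/-- if `(a,b)` collides and no other colliding pair touches `{a,b}`, `D = DOut + 1`. -/
lemma DOf_eq_DOutOf_add_one {a b : Fin n} {f : Fin n → ℕ}
    (hab : (a, b) ∈ collOf f)
    (hno : ∀ e ∈ collOf f, e ≠ (a, b) → ¬ touch a b e) :
    DOf f = DOutOf a b f + 1 := by
  classical
  have hdecomp : collOf f = insert (a, b) ((collOf f).filter fun e => ¬ touch a b e) := by
    ext e
    simp only [Finset.mem_insert, Finset.mem_filter]
    constructor
    · intro he
      by_cases hc : e = (a, b)
      · exact Or.inl hc
      · exact Or.inr ⟨he, hno e he hc⟩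
    · rintro (rfl | ⟨he, _⟩)
      · exact hab
      · exact he
  unfold DOf
  rw [hdecomp, Finset.card_insert_of_notMem (by simp [touch])]
  rfl

/-- if no colliding pair touches `{a,b}`, `DOut = D`. -/
lemma DOutOf_eq_DOf {a b : Fin n} {f : Fin n → ℕ}
    (hno : ∀ e ∈ collOf f, ¬ touch a b e) : DOutOf a b f = DOf f := by
  unfold DOutOf DOf
  congr 1
  exact Finset.filter_true_of_mem hno



section MeasL

lemma measurableSet_pi_nat {ι : Type*} [Fintype ι] (s : Set (ι → ℕ)) : MeasurableSet s := by
  have hsing : ∀ g : ι → ℕ, MeasurableSet ({g} : Set (ι → ℕ)) := by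
    intro g
    have : ({g} : Set (ι → ℕ)) = ⋂ i, (fun h : ι → ℕ => h i) ⁻¹' {g i} := by
      ext h; simp [funext_iff]
    rw [this]
    exact MeasurableSet.iInter fun i => (measurable_pi_apply i) (measurableSet_singleton _)
  have hs : s = ⋃ g ∈ s, {g} := by simp
  rw [hs]
  exact MeasurableSet.biUnion (Set.to_countable s) fun g _ => hsing g

variable {Ω : Type} {mΩ : MeasurableSpace Ω} {n : ℕ}

lemma measEvent {X : Fin n → Ω → ℕ} (hX : ∀ i, Measurable (X i))
    (P : (Fin n → ℕ) → Prop) : MeasurableSet {ω | P fun i => X i ω} := by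
  have hm : Measurable fun ω (i : Fin n) => X i ω := measurable_pi_lambda _ hX
  exact hm (measurableSet_pi_nat {g | P g})

variable (μ : Measure Ω) [IsProbabilityMeasure μ]
  (X : Fin n → Ω → ℕ) (hX : ∀ i, Measurable (X i))
  (hind : iIndepFun X μ)
  (p : ℕ → ℝ) (hp0 : ∀ j, 0 ≤ p j) (hp1 : (∑' j, p j) = 1)
  (hdist : ∀ i j, μ {ω | X i ω = j} = ENNReal.ofReal (p j))

section
include hp0 hp1

lemma summable_p : Summable p := by
  by_contra h
  rw [tsum_eq_zero_of_not_summable h] at hp1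
  norm_num at hp1

lemma p_le_one : ∀ j, p j ≤ 1 := by
  intro j
  rw [← hp1]
  exact (summable_p p hp0 hp1).le_tsum j fun i _ => hp0 i
  -- note: summable_p needs args

lemma summable_p_sq : Summable fun j => p j ^ 2 := by
  refine Summable.of_nonneg_of_le (fun j => sq_nonneg _) (fun j => ?_) (summable_p p hp0 hp1)
  exact pow_le_of_le_one (hp0 j) (p_le_one p hp0 hp1 j) (by norm_num)

lemma summable_p_cube : Summable fun j => p j ^ 3 := by
  refine Summable.of_nonneg_of_le (fun j => pow_nonneg (hp0 j) 3) (fun j => ?_)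
    (summable_p p hp0 hp1)
  exact pow_le_of_le_one (hp0 j) (p_le_one p hp0 hp1 j) (by norm_num)

end

include hX hind hdist in
lemma meas_pair_eq {a b : Fin n} (hab : a ≠ b) (hp0 : ∀ j, 0 ≤ p j) (hp1 : (∑' j, p j) = 1) :
    μ {ω | X a ω = X b ω} = ENNReal.ofReal (∑' j, p j ^ 2) := by
  classical
  have hset : {ω | X a ω = X b ω} = ⋃ j : ℕ, (X a ⁻¹' {j} ∩ X b ⁻¹' {j}) := by
    ext ω; simp only [Set.mem_setOf_eq, Set.mem_iUnion, Set.mem_inter_iff, Set.mem_preimage,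
      Set.mem_singleton_iff]
    exact ⟨fun h => ⟨X b ω, h, rfl⟩, fun ⟨j, h1, h2⟩ => h1.trans h2.symm⟩
  have hdisj : Pairwise (Function.onFun Disjoint fun j : ℕ => X a ⁻¹' {j} ∩ X b ⁻¹' {j}) := by
    intro i j hij
    simp only [Function.onFun]
    apply Set.disjoint_left.2
    rintro ω ⟨h1, _⟩ ⟨h3, _⟩
    exact hij (h1.symm.trans h3)
  have hmeas : ∀ j : ℕ, MeasurableSet (X a ⁻¹' {j} ∩ X b ⁻¹' {j}) := fun j =>
    ((hX a) (measurableSet_singleton _)).inter ((hX b) (measurableSet_singleton _))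
  rw [hset, measure_iUnion hdisj hmeas]
  have hterm : ∀ j : ℕ, μ (X a ⁻¹' {j} ∩ X b ⁻¹' {j}) = ENNReal.ofReal (p j ^ 2) := by
    intro j
    have hif : IndepFun (X a) (X b) μ := hind.indepFun hab
    rw [hif.measure_inter_preimage_eq_mul _ _ (measurableSet_singleton _)
      (measurableSet_singleton _)]
    have ha' : X a ⁻¹' {j} = {ω | X a ω = j} := rfl
    have hb' : X b ⁻¹' {j} = {ω | X b ω = j} := rfl
    rw [ha', hb', hdist a j, hdist b j, ← ENNReal.ofReal_mul (hp0 j), sq]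
  rw [tsum_congr hterm, ← ENNReal.ofReal_tsum_of_nonneg (fun j => sq_nonneg _)
    (summable_p_sq p hp0 hp1)]

include hX hind hdist in
lemma meas_triple_le {a b c : Fin n} (hab : a ≠ b) (hbc : b ≠ c) (hac : a ≠ c)
    (hp0 : ∀ j, 0 ≤ p j) (hp1 : (∑' j, p j) = 1) :
    μ {ω | X a ω = X b ω ∧ X b ω = X c ω} = ENNReal.ofReal (∑' j, p j ^ 3) := by
  classical
  have hset : {ω | X a ω = X b ω ∧ X b ω = X c ω} =
      ⋃ j : ℕ, (X a ⁻¹' {j} ∩ (X b ⁻¹' {j} ∩ X c ⁻¹' {j})) := by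
    ext ω
    simp only [Set.mem_setOf_eq, Set.mem_iUnion, Set.mem_inter_iff, Set.mem_preimage,
      Set.mem_singleton_iff]
    constructor
    · rintro ⟨h1, h2⟩; exact ⟨X b ω, h1, rfl, h2.symm⟩
    · rintro ⟨j, h1, h2, h3⟩; exact ⟨h1.trans h2.symm, h2.trans h3.symm⟩
  have hdisj : Pairwise (Function.onFun Disjoint
      fun j : ℕ => X a ⁻¹' {j} ∩ (X b ⁻¹' {j} ∩ X c ⁻¹' {j})) := by
    intro i j hij
    apply Set.disjoint_left.2
    rintro ω ⟨h1, _⟩ ⟨h3, _⟩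
    exact hij (h1.symm.trans h3)
  have hmeas : ∀ j : ℕ, MeasurableSet (X a ⁻¹' {j} ∩ (X b ⁻¹' {j} ∩ X c ⁻¹' {j})) := fun j =>
    ((hX a) (measurableSet_singleton _)).inter
      (((hX b) (measurableSet_singleton _)).inter ((hX c) (measurableSet_singleton _)))
  rw [hset, measure_iUnion hdisj hmeas]
  have hterm : ∀ j : ℕ, μ (X a ⁻¹' {j} ∩ (X b ⁻¹' {j} ∩ X c ⁻¹' {j}))
      = ENNReal.ofReal (p j ^ 3) := by
    intro j
    have h3 : μ (⋂ i ∈ ({a, b, c} : Finset (Fin n)), X i ⁻¹' {j})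
        = ∏ i ∈ ({a, b, c} : Finset (Fin n)), μ (X i ⁻¹' {j}) :=
      hind.measure_inter_preimage_eq_mul ({a, b, c} : Finset (Fin n))
        (sets := fun _ => {j}) (fun i _ => measurableSet_singleton _)
    have hseteq : (⋂ i ∈ ({a, b, c} : Finset (Fin n)), X i ⁻¹' {j})
        = X a ⁻¹' {j} ∩ (X b ⁻¹' {j} ∩ X c ⁻¹' {j}) := by
      simp only [Finset.set_biInter_insert, Finset.set_biInter_singleton]
    have hprod : ∏ i ∈ ({a, b, c} : Finset (Fin n)), μ (X i ⁻¹' {j})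
        = ENNReal.ofReal (p j ^ 3) := by
      have hcard : ∀ i : Fin n, μ (X i ⁻¹' {j}) = ENNReal.ofReal (p j) := fun i => hdist i j
      rw [Finset.prod_congr rfl fun i _ => hcard i, Finset.prod_const]
      have : ({a, b, c} : Finset (Fin n)).card = 3 := by
        rw [Finset.card_insert_of_notMem (by simp [hab, hac]),
          Finset.card_insert_of_notMem (by simp [hbc]), Finset.card_singleton]
      rw [this, ← ENNReal.ofReal_pow (hp0 j)]
    rw [← hseteq, h3, hprod]
  rw [tsum_congr hterm, ← ENNReal.ofReal_tsum_of_nonneg (fun j => pow_nonneg (hp0 j) 3)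
    (summable_p_cube p hp0 hp1)]

include hX hind in
lemma indep_pair_rest (a b : Fin n)
    (P Q : (Fin n → ℕ) → Prop)
    (hP : ∀ f g : Fin n → ℕ, f a = g a → f b = g b → (P f ↔ P g))
    (hQ : ∀ f g : Fin n → ℕ, (∀ i, i ≠ a → i ≠ b → f i = g i) → (Q f ↔ Q g)) :
    μ ({ω | P fun i => X i ω} ∩ {ω | Q fun i => X i ω}) =
      μ {ω | P fun i => X i ω} * μ {ω | Q fun i => X i ω} := by
  classical
  set S : Finset (Fin n) := {a, b} with hS
  set T : Finset (Fin n) := Finset.univ \ S with hT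
  have hST : Disjoint S T := Finset.disjoint_sdiff
  have hIF := hind.indepFun_finset S T hST hX
  set extS : (↥S → ℕ) → (Fin n → ℕ) := fun g i => if h : i ∈ S then g ⟨i, h⟩ else 0 with hextS
  set extT : (↥T → ℕ) → (Fin n → ℕ) := fun g i => if h : i ∈ T then g ⟨i, h⟩ else 0 with hextT
  have haS : a ∈ S := by simp [hS]
  have hbS : b ∈ S := by simp [hS]
  have hA : {ω | P fun i => X i ω} = (fun ω (i : ↥S) => X i ω) ⁻¹' {g | P (extS g)} := by
    ext ω
    simp only [Set.mem_setOf_eq, Set.mem_preimage]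
    exact hP _ _ (by simp [hextS, haS]) (by simp [hextS, hbS])
  have hB : {ω | Q fun i => X i ω} = (fun ω (i : ↥T) => X i ω) ⁻¹' {g | Q (extT g)} := by
    ext ω
    simp only [Set.mem_setOf_eq, Set.mem_preimage]
    refine hQ _ _ fun i hia hib => ?_
    have hiT : i ∈ T := by simp [hT, hS, hia, hib]
    simp [hextT, hiT]
  rw [hA, hB]
  exact hIF.measure_inter_preimage_eq_mul _ _ (measurableSet_pi_nat _) (measurableSet_pi_nat _)


end MeasL

section Atoms

variable {Ω : Type} {mΩ : MeasurableSpace Ω} {n : ℕ}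
  (μ : Measure Ω) [IsProbabilityMeasure μ]
  (X : Fin n → Ω → ℕ) (hX : ∀ i, Measurable (X i))

include hX

lemma meas_q (q : Finset (Fin n × Fin n) → Prop) [DecidablePred q] :
    μ {ω | q (collOf fun i => X i ω)} =
      ∑ S ∈ (pairsF n).powerset.filter q, μ {ω | (collOf fun i => X i ω) = S} := by
  classical
  have hset : {ω | q (collOf fun i => X i ω)} =
      ⋃ S ∈ (pairsF n).powerset.filter q, {ω | (collOf fun i => X i ω) = S} := by
    ext ω
    simp only [Set.mem_setOf_eq, Set.mem_iUnion]
    constructor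
    · intro h
      exact ⟨collOf fun i => X i ω,
        by simp only [Finset.mem_filter, Finset.mem_powerset]
           exact ⟨Finset.filter_subset _ _, h⟩,
        rfl⟩
    · rintro ⟨S, hS, hcoll⟩
      simp only [Finset.mem_filter] at hS
      have hcoll' : (collOf fun i => X i ω) = S := hcoll
      rw [hcoll']
      exact hS.2
  have hdisj : Set.PairwiseDisjoint ↑((pairsF n).powerset.filter q)
      (fun S => {ω | (collOf fun i => X i ω) = S}) := by
    intro S _ S' _ hSS'
    apply Set.disjoint_left.2
    intro ω h1 h2
    have h1' : (collOf fun i => X i ω) = S := h1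
    have h2' : (collOf fun i => X i ω) = S' := h2
    exact hSS' (h1' ▸ h2' ▸ rfl)
  rw [hset, measure_biUnion_finset hdisj fun S _ => measEvent hX fun f => collOf f = S]

lemma sum_e_mem (q : Finset (Fin n × Fin n) → Prop) [DecidablePred q] :
    ∑ e ∈ pairsF n, μ {ω | e ∈ (collOf fun i => X i ω) ∧ q (collOf fun i => X i ω)} =
      ∑ S ∈ (pairsF n).powerset.filter q,
        (S.card : ℝ≥0∞) * μ {ω | (collOf fun i => X i ω) = S} := by
  classical
  have hstep : ∀ e : Fin n × Fin n,
      μ {ω | e ∈ (collOf fun i => X i ω) ∧ q (collOf fun i => X i ω)} =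
        ∑ S ∈ ((pairsF n).powerset.filter q).filter (fun S => e ∈ S),
          μ {ω | (collOf fun i => X i ω) = S} := by
    intro e
    have := meas_q μ X hX (fun S => e ∈ S ∧ q S)
    rw [this]
    congr 1
    rw [Finset.filter_filter]
    apply Finset.filter_congr
    intro S _
    tauto
  have hstep' : ∀ e : Fin n × Fin n,
      μ {ω | e ∈ (collOf fun i => X i ω) ∧ q (collOf fun i => X i ω)} =
        ∑ S ∈ (pairsF n).powerset.filter q,
          if e ∈ S then μ {ω | (collOf fun i => X i ω) = S} else 0 := by
    intro e
    rw [hstep e, Finset.sum_filter]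
  rw [Finset.sum_congr rfl fun e _ => hstep' e]
  rw [Finset.sum_comm]
  refine Finset.sum_congr rfl fun S hS => ?_
  have hSsub : S ⊆ pairsF n := by
    have := (Finset.mem_filter.1 hS).1
    exact Finset.mem_powerset.1 this
  rw [Finset.sum_ite_mem, Finset.inter_eq_right.mpr hSsub, Finset.sum_const, nsmul_eq_mul]

end Atoms

section Rec

variable {Ω : Type} {mΩ : MeasurableSpace Ω} {n : ℕ}
  (μ : Measure Ω) [IsProbabilityMeasure μ]
  (X : Fin n → Ω → ℕ) (hX : ∀ i, Measurable (X i))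
  (hind : iIndepFun X μ)
  (p : ℕ → ℝ) (hp0 : ∀ j, 0 ≤ p j) (hp1 : (∑' j, p j) = 1)
  (hdist : ∀ i j, μ {ω | X i ω = j} = ENNReal.ofReal (p j))

/-- helper: measure of symmetric-difference-controlled events -/
lemma meas_le_of_subset_union {A B E : Set Ω} (h : A ⊆ B ∪ E) : μ A ≤ μ B + μ E :=
  le_trans (measure_mono h) (measure_union_le _ _)

include hX hind hdist hp0 hp1

lemma pair_pair_le (a b c d : Fin n) (hab : a < b) (hcd : c < d)
    (hne : (c, d) ≠ (a, b)) (htouch : touch a b (c, d)) :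
    μ {ω | X a ω = X b ω ∧ X c ω = X d ω} ≤ ENNReal.ofReal (∑' j, p j ^ 3) := by
  rcases htouch with hc | hc | hc | hc
  · -- c = a, d ≠ b
    subst hc
    have hdb : d ≠ b := fun h => hne (by rw [h])
    refine le_trans (measure_mono ?_) (le_of_eq
      (meas_triple_le μ X hX hind p hdist (a := b) (b := c) (c := d)
        (Ne.symm (ne_of_lt hab)) (ne_of_lt hcd) (Ne.symm hdb) hp0 hp1))
    rintro ω ⟨h1, h2⟩
    exact ⟨h1.symm, h2⟩
  · -- c = b
    subst hc
    refine le_trans (measure_mono ?_) (le_of_eq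
      (meas_triple_le μ X hX hind p hdist (a := a) (b := c) (c := d)
        (ne_of_lt hab) (ne_of_lt hcd) (ne_of_lt (lt_trans hab hcd)) hp0 hp1))
    rintro ω ⟨h1, h2⟩
    exact ⟨h1, h2⟩
  · -- d = a
    subst hc
    refine le_trans (measure_mono ?_) (le_of_eq
      (meas_triple_le μ X hX hind p hdist (a := c) (b := d) (c := b)
        (ne_of_lt hcd) (ne_of_lt hab) (ne_of_lt (lt_trans hcd hab)) hp0 hp1))
    rintro ω ⟨h1, h2⟩
    exact ⟨h2, h1⟩
  · -- d = b, c ≠ a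
    subst hc
    have hca : c ≠ a := fun h => hne (by rw [h])
    refine le_trans (measure_mono ?_) (le_of_eq
      (meas_triple_le μ X hX hind p hdist (a := a) (b := d) (c := c)
        (ne_of_lt hab) (Ne.symm (ne_of_lt hcd)) (Ne.symm hca) hp0 hp1))
    rintro ω ⟨h1, h2⟩
    exact ⟨h1, h2.symm⟩

lemma touch_bound (a b : Fin n) (hab : a < b) :
    μ {ω | (X a ω = X b ω) ∧
        ∃ e' ∈ collOf (fun i => X i ω), e' ≠ (a, b) ∧ touch a b e'} ≤
      (4 * n : ℕ) * ENNReal.ofReal (∑' j, p j ^ 3) := by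
  classical
  set U := (pairsF n).filter fun e' => touch a b e' ∧ e' ≠ (a, b) with hU
  have hincl : {ω | (X a ω = X b ω) ∧
      ∃ e' ∈ collOf (fun i => X i ω), e' ≠ (a, b) ∧ touch a b e'} ⊆
      ⋃ e' ∈ U, {ω | X a ω = X b ω ∧ X e'.1 ω = X e'.2 ω} := by
    rintro ω ⟨h1, e', he', hne, ht⟩
    rw [mem_collOf] at he'
    have hmemU : e' ∈ U := by
      rw [hU, Finset.mem_filter]
      exact ⟨by simpa [pairsF] using he'.1, ht, hne⟩
    exact Set.mem_biUnion hmemU ⟨h1, he'.2⟩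
  refine le_trans (measure_mono hincl) (le_trans (measure_biUnion_finset_le U _) ?_)
  have hterm : ∀ e' ∈ U, μ {ω | X a ω = X b ω ∧ X e'.1 ω = X e'.2 ω} ≤
      ENNReal.ofReal (∑' j, p j ^ 3) := by
    intro e' he'
    rw [hU, Finset.mem_filter] at he'
    have hlt : e'.1 < e'.2 := by
      have := he'.1
      simp only [pairsF, Finset.mem_filter, Finset.mem_univ, true_and] at this
      exact this
    exact pair_pair_le μ X hX hind p hp0 hp1 hdist a b e'.1 e'.2 hab hlt
      (by rcases e' with ⟨c, d⟩; exact he'.2.2) he'.2.1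
  refine le_trans (Finset.sum_le_sum hterm) ?_
  rw [Finset.sum_const, nsmul_eq_mul]
  have hcard : U.card ≤ 4 * n := by
    refine le_trans (Finset.card_le_card ?_) (card_touch_le a b)
    intro e' he'
    simp only [hU, Finset.mem_filter] at he' ⊢
    exact ⟨he'.1, he'.2.1⟩
  exact mul_le_mul_left (by exact_mod_cast Nat.cast_le.2 hcard) _

lemma touchAny_bound (a b : Fin n) :
    μ {ω | ∃ e' ∈ collOf (fun i => X i ω), touch a b e'} ≤
      (4 * n : ℕ) * ENNReal.ofReal (∑' j, p j ^ 2) := by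
  classical
  set U := (pairsF n).filter fun e' => touch a b e' with hU
  have hincl : {ω | ∃ e' ∈ collOf (fun i => X i ω), touch a b e'} ⊆
      ⋃ e' ∈ U, {ω | X e'.1 ω = X e'.2 ω} := by
    rintro ω ⟨e', he', ht⟩
    rw [mem_collOf] at he'
    have hmemU : e' ∈ U := by
      rw [hU, Finset.mem_filter]
      exact ⟨by simpa [pairsF] using he'.1, ht⟩
    exact Set.mem_biUnion hmemU he'.2
  refine le_trans (measure_mono hincl) (le_trans (measure_biUnion_finset_le U _) ?_)
  have hterm : ∀ e' ∈ U, μ {ω | X e'.1 ω = X e'.2 ω} =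
      ENNReal.ofReal (∑' j, p j ^ 2) := by
    intro e' he'
    rw [hU, Finset.mem_filter] at he'
    have hlt : e'.1 < e'.2 := by
      have := he'.1
      simp only [pairsF, Finset.mem_filter, Finset.mem_univ, true_and] at this
      exact this
    exact meas_pair_eq μ X hX hind p hdist (ne_of_lt hlt) hp0 hp1
  rw [Finset.sum_congr rfl hterm, Finset.sum_const, nsmul_eq_mul]
  exact mul_le_mul_left (by exact_mod_cast Nat.cast_le.2 (card_touch_le a b)) _

end Rec

section Rec2

variable {Ω : Type} {mΩ : MeasurableSpace Ω} {n : ℕ}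
  (μ : Measure Ω) [IsProbabilityMeasure μ]
  (X : Fin n → Ω → ℕ) (hX : ∀ i, Measurable (X i))
  (hind : iIndepFun X μ)
  (p : ℕ → ℝ) (hp0 : ∀ j, 0 ≤ p j) (hp1 : (∑' j, p j) = 1)
  (hdist : ∀ i j, μ {ω | X i ω = j} = ENNReal.ofReal (p j))

include hX

lemma sum_e_card (k : ℕ) :
    ∑ e ∈ pairsF n, μ {ω | e ∈ (collOf fun i => X i ω) ∧ (collOf fun i => X i ω).card = k} =
      (k : ℝ≥0∞) * μ {ω | (collOf fun i => X i ω).card = k} := by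
  classical
  rw [sum_e_mem μ X hX (fun S => S.card = k), meas_q μ X hX (fun S => S.card = k),
    Finset.mul_sum]
  refine Finset.sum_congr rfl fun S hS => ?_
  rw [Finset.mem_filter] at hS
  rw [hS.2]

lemma markov_bound (K : ℕ)
    (hind' : iIndepFun X μ)
    (hp0 : ∀ j, 0 ≤ p j) (hp1 : (∑' j, p j) = 1)
    (hdist' : ∀ i j, μ {ω | X i ω = j} = ENNReal.ofReal (p j)) :
    ((K : ℝ≥0∞) + 1) * μ {ω | K + 1 ≤ (collOf fun i => X i ω).card} ≤
      ((pairsF n).card : ℝ≥0∞) * ENNReal.ofReal (∑' j, p j ^ 2) := by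
  classical
  have h1 : ((K : ℝ≥0∞) + 1) * μ {ω | K + 1 ≤ (collOf fun i => X i ω).card} ≤
      ∑ e ∈ pairsF n,
        μ {ω | e ∈ (collOf fun i => X i ω) ∧ K + 1 ≤ (collOf fun i => X i ω).card} := by
    rw [sum_e_mem μ X hX (fun S => K + 1 ≤ S.card),
      meas_q μ X hX (fun S => K + 1 ≤ S.card), Finset.mul_sum]
    refine Finset.sum_le_sum fun S hS => ?_
    rw [Finset.mem_filter] at hS
    refine mul_le_mul_left ?_ _
    have : ((K : ℝ≥0∞) + 1) = ((K + 1 : ℕ) : ℝ≥0∞) := by push_cast; ring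
    rw [this]
    exact_mod_cast Nat.cast_le.2 hS.2
  refine le_trans h1 ?_
  have h2 : ∀ e ∈ pairsF n,
      μ {ω | e ∈ (collOf fun i => X i ω) ∧ K + 1 ≤ (collOf fun i => X i ω).card} ≤
        ENNReal.ofReal (∑' j, p j ^ 2) := by
    intro e he
    have hlt : e.1 < e.2 := by
      simp only [pairsF, Finset.mem_filter, Finset.mem_univ, true_and] at he
      exact he
    refine le_trans (measure_mono ?_) (le_of_eq
      (meas_pair_eq μ X hX hind' p hdist' (ne_of_lt hlt) hp0 hp1))
    rintro ω ⟨h1', _⟩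
    exact (mem_collOf.1 h1').2
  refine le_trans (Finset.sum_le_sum h2) ?_
  rw [Finset.sum_const, nsmul_eq_mul]

include hind hp0 hp1 hdist

lemma recursion_bound (k : ℕ) (hk : 1 ≤ k) :
    (k : ℝ≥0∞) * μ {ω | (collOf fun i => X i ω).card = k} ≤
        ENNReal.ofReal (∑' j, p j ^ 2) *
          (((pairsF n).card : ℝ≥0∞) * μ {ω | (collOf fun i => X i ω).card = k - 1}) +
        (((pairsF n).card : ℝ≥0∞) * ((4 * n : ℕ) * ENNReal.ofReal (∑' j, p j ^ 3)) +
         ((pairsF n).card : ℝ≥0∞) * (ENNReal.ofReal (∑' j, p j ^ 2) *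
            ((4 * n : ℕ) * ENNReal.ofReal (∑' j, p j ^ 2)))) ∧
      ENNReal.ofReal (∑' j, p j ^ 2) *
          (((pairsF n).card : ℝ≥0∞) * μ {ω | (collOf fun i => X i ω).card = k - 1}) ≤
        (k : ℝ≥0∞) * μ {ω | (collOf fun i => X i ω).card = k} +
        (((pairsF n).card : ℝ≥0∞) * ((4 * n : ℕ) * ENNReal.ofReal (∑' j, p j ^ 3)) +
         ((pairsF n).card : ℝ≥0∞) * (ENNReal.ofReal (∑' j, p j ^ 2) *
            ((4 * n : ℕ) * ENNReal.ofReal (∑' j, p j ^ 2)))) := by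
  classical
  set s2 := ENNReal.ofReal (∑' j, p j ^ 2) with hs2
  set s3 := ENNReal.ofReal (∑' j, p j ^ 3) with hs3
  set qk := μ {ω | (collOf fun i => X i ω).card = k} with hqk
  set qm := μ {ω | (collOf fun i => X i ω).card = k - 1} with hqm
  -- edge-level quantities
  have hedge_eq : ∀ e ∈ pairsF n,
      {ω | e ∈ (collOf fun i => X i ω) ∧ (collOf fun i => X i ω).card = k} =
        {ω | X e.1 ω = X e.2 ω ∧ (collOf fun i => X i ω).card = k} := by
    intro e he
    have hlt : e.1 < e.2 := by
      simp only [pairsF, Finset.mem_filter, Finset.mem_univ, true_and] at he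
      exact he
    ext ω
    simp only [Set.mem_setOf_eq, mem_collOf]
    tauto
  -- (R1) upper and lower delta bounds
  have hR1u : ∀ e ∈ pairsF n,
      μ {ω | X e.1 ω = X e.2 ω ∧ (collOf fun i => X i ω).card = k} ≤
        μ {ω | X e.1 ω = X e.2 ω ∧ DOutOf e.1 e.2 (fun i => X i ω) = k - 1} +
          (4 * n : ℕ) * s3 := by
    intro e he
    have hlt : e.1 < e.2 := by
      simp only [pairsF, Finset.mem_filter, Finset.mem_univ, true_and] at he
      exact he
    refine le_trans (meas_le_of_subset_union μ (E :=
      {ω | (X e.1 ω = X e.2 ω) ∧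
        ∃ e' ∈ collOf (fun i => X i ω), e' ≠ (e.1, e.2) ∧ touch e.1 e.2 e'}) ?_)
      (add_le_add_right (touch_bound μ X hX hind p hp0 hp1 hdist e.1 e.2 hlt) _)
    intro ω hω
    obtain ⟨h1, h2⟩ := hω
    by_cases hT : ∃ e' ∈ collOf (fun i => X i ω), e' ≠ (e.1, e.2) ∧ touch e.1 e.2 e'
    · exact Or.inr ⟨h1, hT⟩
    · push_neg at hT
      left
      refine ⟨h1, ?_⟩
      have hmem : (e.1, e.2) ∈ collOf (fun i => X i ω) := mem_collOf.2 ⟨hlt, h1⟩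
      have := DOf_eq_DOutOf_add_one (f := fun i => X i ω) hmem
        (fun e' he' hne => hT e' he' hne)
      have hD : DOf (fun i => X i ω) = (collOf fun i => X i ω).card := rfl
      omega
  have hR1l : ∀ e ∈ pairsF n,
      μ {ω | X e.1 ω = X e.2 ω ∧ DOutOf e.1 e.2 (fun i => X i ω) = k - 1} ≤
        μ {ω | X e.1 ω = X e.2 ω ∧ (collOf fun i => X i ω).card = k} +
          (4 * n : ℕ) * s3 := by
    intro e he
    have hlt : e.1 < e.2 := by
      simp only [pairsF, Finset.mem_filter, Finset.mem_univ, true_and] at he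
      exact he
    refine le_trans (meas_le_of_subset_union μ (E :=
      {ω | (X e.1 ω = X e.2 ω) ∧
        ∃ e' ∈ collOf (fun i => X i ω), e' ≠ (e.1, e.2) ∧ touch e.1 e.2 e'}) ?_)
      (add_le_add_right (touch_bound μ X hX hind p hp0 hp1 hdist e.1 e.2 hlt) _)
    intro ω hω
    obtain ⟨h1, h2⟩ := hω
    by_cases hT : ∃ e' ∈ collOf (fun i => X i ω), e' ≠ (e.1, e.2) ∧ touch e.1 e.2 e'
    · exact Or.inr ⟨h1, hT⟩
    · push_neg at hT
      left
      refine ⟨h1, ?_⟩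
      have hmem : (e.1, e.2) ∈ collOf (fun i => X i ω) := mem_collOf.2 ⟨hlt, h1⟩
      have := DOf_eq_DOutOf_add_one (f := fun i => X i ω) hmem
        (fun e' he' hne => hT e' he' hne)
      have hD : DOf (fun i => X i ω) = (collOf fun i => X i ω).card := rfl
      omega
  -- (R2) independence
  have hR2 : ∀ e ∈ pairsF n,
      μ {ω | X e.1 ω = X e.2 ω ∧ DOutOf e.1 e.2 (fun i => X i ω) = k - 1} =
        s2 * μ {ω | DOutOf e.1 e.2 (fun i => X i ω) = k - 1} := by
    intro e he
    have hlt : e.1 < e.2 := by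
      simp only [pairsF, Finset.mem_filter, Finset.mem_univ, true_and] at he
      exact he
    have hsplit : {ω | X e.1 ω = X e.2 ω ∧ DOutOf e.1 e.2 (fun i => X i ω) = k - 1} =
        {ω | (fun i => X i ω) e.1 = (fun i => X i ω) e.2} ∩
          {ω | DOutOf e.1 e.2 (fun i => X i ω) = k - 1} := rfl
    rw [hsplit, indep_pair_rest μ X hX hind e.1 e.2
      (fun f => f e.1 = f e.2) (fun f => DOutOf e.1 e.2 f = k - 1)
      (fun f g h1 h2 => by
        show f e.1 = f e.2 ↔ g e.1 = g e.2
        rw [h1, h2])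
      (fun f g h => by
        show DOutOf e.1 e.2 f = k - 1 ↔ DOutOf e.1 e.2 g = k - 1
        rw [DOutOf_congr h]),
      meas_pair_eq μ X hX hind p hdist (ne_of_lt hlt) hp0 hp1]
  -- (R3) DOut vs D
  have hR3u : ∀ e ∈ pairsF n,
      μ {ω | DOutOf e.1 e.2 (fun i => X i ω) = k - 1} ≤
        qm + (4 * n : ℕ) * s2 := by
    intro e he
    refine le_trans (meas_le_of_subset_union μ (E :=
      {ω | ∃ e' ∈ collOf (fun i => X i ω), touch e.1 e.2 e'}) ?_)
      (add_le_add_right (touchAny_bound μ X hX hind p hp0 hp1 hdist e.1 e.2) _)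
    intro ω hω
    by_cases hT : ∃ e' ∈ collOf (fun i => X i ω), touch e.1 e.2 e'
    · exact Or.inr hT
    · push_neg at hT
      left
      have := DOutOf_eq_DOf (a := e.1) (b := e.2) (f := fun i => X i ω)
        (fun e' he' => hT e' he')
      have hD : DOf (fun i => X i ω) = (collOf fun i => X i ω).card := rfl
      have hω' : DOutOf e.1 e.2 (fun i => X i ω) = k - 1 := hω
      show (collOf fun i => X i ω).card = k - 1
      omega
  have hR3l : ∀ e ∈ pairsF n,
      qm ≤ μ {ω | DOutOf e.1 e.2 (fun i => X i ω) = k - 1} + (4 * n : ℕ) * s2 := by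
    intro e he
    refine le_trans (meas_le_of_subset_union μ (E :=
      {ω | ∃ e' ∈ collOf (fun i => X i ω), touch e.1 e.2 e'}) ?_)
      (add_le_add_right (touchAny_bound μ X hX hind p hp0 hp1 hdist e.1 e.2) _)
    intro ω hω
    by_cases hT : ∃ e' ∈ collOf (fun i => X i ω), touch e.1 e.2 e'
    · exact Or.inr hT
    · push_neg at hT
      left
      have := DOutOf_eq_DOf (a := e.1) (b := e.2) (f := fun i => X i ω)
        (fun e' he' => hT e' he')
      have hD : DOf (fun i => X i ω) = (collOf fun i => X i ω).card := rfl
      have hω' : (collOf fun i => X i ω).card = k - 1 := hω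
      show DOutOf e.1 e.2 (fun i => X i ω) = k - 1
      omega
  have hK1 : (k : ℝ≥0∞) * qk =
      ∑ e ∈ pairsF n, μ {ω | X e.1 ω = X e.2 ω ∧ (collOf fun i => X i ω).card = k} := by
    rw [← sum_e_card μ X hX k]
    exact (Finset.sum_congr rfl fun e he => by rw [hedge_eq e he]).symm
  constructor
  · rw [hK1]
    calc ∑ e ∈ pairsF n, μ {ω | X e.1 ω = X e.2 ω ∧ (collOf fun i => X i ω).card = k}
        ≤ ∑ e ∈ pairsF n,
            (μ {ω | X e.1 ω = X e.2 ω ∧ DOutOf e.1 e.2 (fun i => X i ω) = k - 1} +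
              (4 * n : ℕ) * s3) := Finset.sum_le_sum hR1u
      _ = ∑ e ∈ pairsF n,
            s2 * μ {ω | DOutOf e.1 e.2 (fun i => X i ω) = k - 1} +
            ((pairsF n).card : ℝ≥0∞) * ((4 * n : ℕ) * s3) := by
          rw [Finset.sum_add_distrib, Finset.sum_const, nsmul_eq_mul]
          congr 1
          exact Finset.sum_congr rfl hR2
      _ ≤ ∑ e ∈ pairsF n, s2 * (qm + (4 * n : ℕ) * s2) +
            ((pairsF n).card : ℝ≥0∞) * ((4 * n : ℕ) * s3) := by
          gcongr with e he
          exact hR3u e he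
      _ = s2 * (((pairsF n).card : ℝ≥0∞) * qm) +
            (((pairsF n).card : ℝ≥0∞) * ((4 * n : ℕ) * s3) +
              ((pairsF n).card : ℝ≥0∞) * (s2 * ((4 * n : ℕ) * s2))) := by
          rw [Finset.sum_const, nsmul_eq_mul]
          ring
  · calc s2 * (((pairsF n).card : ℝ≥0∞) * qm)
        = ∑ e ∈ pairsF n, s2 * qm := by rw [Finset.sum_const, nsmul_eq_mul]; ring
      _ ≤ ∑ e ∈ pairsF n,
            s2 * (μ {ω | DOutOf e.1 e.2 (fun i => X i ω) = k - 1} + (4 * n : ℕ) * s2) := by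
          gcongr with e he
          exact hR3l e he
      _ = ∑ e ∈ pairsF n,
            μ {ω | X e.1 ω = X e.2 ω ∧ DOutOf e.1 e.2 (fun i => X i ω) = k - 1} +
            ((pairsF n).card : ℝ≥0∞) * (s2 * ((4 * n : ℕ) * s2)) := by
          have hsplit2 : ∀ e ∈ pairsF n,
              s2 * (μ {ω | DOutOf e.1 e.2 (fun i => X i ω) = k - 1} + (4 * n : ℕ) * s2) =
                μ {ω | X e.1 ω = X e.2 ω ∧ DOutOf e.1 e.2 (fun i => X i ω) = k - 1} +
                  s2 * ((4 * n : ℕ) * s2) := by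
            intro e he
            rw [mul_add, ← hR2 e he]
          rw [Finset.sum_congr rfl hsplit2, Finset.sum_add_distrib, Finset.sum_const,
            nsmul_eq_mul]
      _ ≤ ∑ e ∈ pairsF n,
            (μ {ω | X e.1 ω = X e.2 ω ∧ (collOf fun i => X i ω).card = k} +
              (4 * n : ℕ) * s3) +
            ((pairsF n).card : ℝ≥0∞) * (s2 * ((4 * n : ℕ) * s2)) := by
          gcongr with e he
          exact hR1l e he
      _ = (k : ℝ≥0∞) * qk +
            (((pairsF n).card : ℝ≥0∞) * ((4 * n : ℕ) * s3) +
              ((pairsF n).card : ℝ≥0∞) * (s2 * ((4 * n : ℕ) * s2))) := by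
          rw [Finset.sum_add_distrib, Finset.sum_const, nsmul_eq_mul, hK1]
          ring

end Rec2

section Tri

variable {Ω : Type} {mΩ : MeasurableSpace Ω} {n : ℕ}
  (μ : Measure Ω) [IsProbabilityMeasure μ]
  (X : Fin n → Ω → ℕ) (hX : ∀ i, Measurable (X i))
  (hind : iIndepFun X μ)
  (p : ℕ → ℝ) (hp0 : ∀ j, 0 ≤ p j) (hp1 : (∑' j, p j) = 1)
  (hdist : ∀ i j, μ {ω | X i ω = j} = ENNReal.ofReal (p j))

include hX hind hp0 hp1 hdist

lemma triple_event_bound :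
    μ {ω | ¬ noTriple (fun i => X i ω)} ≤
      (n ^ 3 : ℕ) * ENNReal.ofReal (∑' j, p j ^ 3) := by
  classical
  set T3 : Finset (Fin n × Fin n × Fin n) :=
    Finset.univ.filter (fun t => t.1 < t.2.1 ∧ t.2.1 < t.2.2) with hT3
  have hincl : {ω | ¬ noTriple (fun i => X i ω)} ⊆
      ⋃ t ∈ T3, {ω | X t.1 ω = X t.2.1 ω ∧ X t.2.1 ω = X t.2.2 ω} := by
    intro ω hω
    simp only [Set.mem_setOf_eq, noTriple, not_forall] at hω
    obtain ⟨i, j, l, hij, hjl, h1, h2, _⟩ := hω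
    have hmem : (i, j, l) ∈ T3 := by
      rw [hT3, Finset.mem_filter]
      exact ⟨Finset.mem_univ _, hij, hjl⟩
    exact Set.mem_biUnion hmem ⟨h1, h2⟩
  refine le_trans (measure_mono hincl) (le_trans (measure_biUnion_finset_le T3 _) ?_)
  have hterm : ∀ t ∈ T3,
      μ {ω | X t.1 ω = X t.2.1 ω ∧ X t.2.1 ω = X t.2.2 ω} =
        ENNReal.ofReal (∑' j, p j ^ 3) := by
    intro t ht
    rw [hT3, Finset.mem_filter] at ht
    exact meas_triple_le μ X hX hind p hdist (ne_of_lt ht.2.1) (ne_of_lt ht.2.2)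
      (ne_of_lt (lt_trans ht.2.1 ht.2.2)) hp0 hp1
  rw [Finset.sum_congr rfl hterm, Finset.sum_const, nsmul_eq_mul]
  refine mul_le_mul_left ?_ _
  have : T3.card ≤ n ^ 3 := by
    refine le_trans (Finset.card_le_card (Finset.filter_subset _ _)) ?_
    rw [Finset.card_univ]
    simp [pow_succ, mul_comm, mul_assoc]
  exact_mod_cast Nat.cast_le.2 this

lemma W_vs_D_bound (k : ℕ) :
    μ {ω | n - (Finset.univ.image fun i => X i ω).card = k} ≤
        μ {ω | (collOf fun i => X i ω).card = k} +
          (n ^ 3 : ℕ) * ENNReal.ofReal (∑' j, p j ^ 3) ∧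
      μ {ω | (collOf fun i => X i ω).card = k} ≤
        μ {ω | n - (Finset.univ.image fun i => X i ω).card = k} +
          (n ^ 3 : ℕ) * ENNReal.ofReal (∑' j, p j ^ 3) := by
  have key : ∀ ω, noTriple (fun i => X i ω) →
      (n - (Finset.univ.image fun i => X i ω).card = k ↔
        (collOf fun i => X i ω).card = k) := by
    intro ω hnt
    rw [n_sub_Z_eq_DOf hnt]
    exact Iff.rfl
  constructor
  · refine le_trans (meas_le_of_subset_union μ
      (E := {ω | ¬ noTriple (fun i => X i ω)}) ?_)
      (add_le_add_right (triple_event_bound μ X hX hind p hp0 hp1 hdist) _)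
    intro ω hω
    by_cases hnt : noTriple (fun i => X i ω)
    · exact Or.inl ((key ω hnt).1 hω)
    · exact Or.inr hnt
  · refine le_trans (meas_le_of_subset_union μ
      (E := {ω | ¬ noTriple (fun i => X i ω)}) ?_)
      (add_le_add_right (triple_event_bound μ X hX hind p hp0 hp1 hdist) _)
    intro ω hω
    by_cases hnt : noTriple (fun i => X i ω)
    · exact Or.inl ((key ω hnt).2 hω)
    · exact Or.inr hnt

end Tri

/-- ENNReal to real two-sided bound helper -/
lemma abs_toReal_sub_le {a b c : ℝ≥0∞} (ha : a ≠ ⊤) (hb : b ≠ ⊤) (hc : c ≠ ⊤)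
    (h1 : a ≤ b + c) (h2 : b ≤ a + c) : |a.toReal - b.toReal| ≤ c.toReal := by
  rw [abs_sub_le_iff]
  constructor
  · have := ENNReal.toReal_mono (by finiteness) h1
    rw [ENNReal.toReal_add hb hc] at this
    linarith
  · have := ENNReal.toReal_mono (by finiteness) h2
    rw [ENNReal.toReal_add ha hc] at this
    linarith


lemma exp_partial_sums (lam : ℝ) :
    Tendsto (fun K => ∑ m ∈ Finset.range (K + 1), lam ^ m / m.factorial) atTop
      (𝓝 (Real.exp lam)) := by
  have hsum : HasSum (fun m : ℕ => lam ^ m / m.factorial) (Real.exp lam) := by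
    have h1 : Real.exp lam = ∑' m : ℕ, lam ^ m / m.factorial := by
      rw [Real.exp_eq_exp_ℝ, NormedSpace.exp_eq_tsum_div]
    rw [h1]
    exact (Real.summable_pow_div_factorial lam).hasSum
  have := hsum.tendsto_sum_nat
  exact this.comp (tendsto_add_atTop_nat 1)

lemma key_limit (Q : ℕ → ℕ → ℝ) (R : ℕ → ℕ → ℝ) (lamn : ℕ → ℝ) (lam : ℝ)
    (hlam0 : 0 ≤ lam)
    (hlamn : Tendsto lamn atTop (𝓝 lam))
    (hlamn0 : ∀ n, 0 ≤ lamn n)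
    (hQ0 : ∀ n m, 0 ≤ Q n m)
    (hrec : ∀ m : ℕ, 1 ≤ m →
      Tendsto (fun n => (m : ℝ) * Q n m - lamn n * Q n (m - 1)) atTop (𝓝 0))
    (hR0 : ∀ K n, 0 ≤ R K n)
    (hRle : ∀ K n : ℕ, ((K : ℝ) + 1) * R K n ≤ lamn n)
    (hnorm : ∀ K n, (∑ m ∈ Finset.range (K + 1), Q n m) + R K n = 1) :
    ∀ m : ℕ, Tendsto (fun n => Q n m) atTop
      (𝓝 (Real.exp (-lam) * lam ^ m / m.factorial)) := by
  -- Step A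
  have hA : ∀ m : ℕ, Tendsto (fun n => Q n m - lamn n ^ m / m.factorial * Q n 0)
      atTop (𝓝 0) := by
    intro m
    induction m with
    | zero =>
      simpa using tendsto_const_nhds
    | succ m ih =>
      have h1 := hrec (m + 1) (by omega)
      simp only [Nat.add_sub_cancel] at h1
      have h2 : Tendsto (fun n => lamn n * (Q n m - lamn n ^ m / m.factorial * Q n 0))
          atTop (𝓝 (lam * 0)) := hlamn.mul ih
      rw [mul_zero] at h2
      have h3 : Tendsto (fun n =>
          ((m + 1 : ℕ) : ℝ) * Q n (m + 1) - lamn n ^ (m + 1) / m.factorial * Q n 0)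
          atTop (𝓝 0) := by
        have h4 := h1.add h2
        rw [add_zero] at h4
        convert h4 using 2 with n
        ring
      have h5 := h3.const_mul (1 / ((m : ℝ) + 1))
      rw [mul_zero] at h5
      have hm1 : ((m : ℝ) + 1) ≠ 0 := by positivity
      convert h5 using 2 with n
      have hfact : ((m + 1).factorial : ℝ) = ((m : ℝ) + 1) * m.factorial := by
        rw [Nat.factorial_succ]
        push_cast
        ring
      rw [hfact]
      push_cast
      field_simp
  -- Step B
  have hB : Tendsto (fun n => Q n 0) atTop (𝓝 (Real.exp (-lam))) := by
    rw [Metric.tendsto_atTop]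
    intro ε hε
    -- choose K
    have hTtend := exp_partial_sums lam
    have hexp_pos : 0 < Real.exp lam := Real.exp_pos lam
    have hinv : Tendsto (fun K => (∑ m ∈ Finset.range (K + 1), lam ^ m / m.factorial)⁻¹)
        atTop (𝓝 (Real.exp lam)⁻¹) := hTtend.inv₀ (ne_of_gt hexp_pos)
    have hKapprox : ∀ᶠ K in atTop,
        |(∑ m ∈ Finset.range (K + 1), lam ^ m / m.factorial)⁻¹ - (Real.exp lam)⁻¹| < ε / 4 := by
      have := hinv
      rw [Metric.tendsto_atTop] at this
      obtain ⟨N, hN⟩ := this (ε / 4) (by linarith)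
      exact eventually_atTop.2 ⟨N, fun K hK => by simpa [Real.dist_eq] using hN K hK⟩
    have hKsmall : ∀ᶠ K : ℕ in atTop, (lam + 1) / (K + 1 : ℝ) < ε / 4 := by
      have h := tendsto_one_div_add_atTop_nhds_zero_nat (𝕜 := ℝ)
      have h2 : Tendsto (fun K : ℕ => (lam + 1) / (K + 1 : ℝ)) atTop (𝓝 ((lam + 1) * 0)) := by
        have h3 : Tendsto (fun K : ℕ => (lam + 1) * (1 / (K + 1 : ℝ))) atTop
            (𝓝 ((lam + 1) * 0)) := h.const_mul _
        convert h3 using 2 with K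
        ring
      rw [mul_zero] at h2
      rw [Metric.tendsto_atTop] at h2
      obtain ⟨N, hN⟩ := h2 (ε / 4) (by linarith)
      refine eventually_atTop.2 ⟨N, fun K hK => ?_⟩
      have := hN K hK
      rw [Real.dist_eq, sub_zero] at this
      exact lt_of_le_of_lt (le_abs_self _) this
    obtain ⟨K, hK1, hK2⟩ := (hKapprox.and hKsmall).exists
    -- now work with this K
    set T : ℝ := ∑ m ∈ Finset.range (K + 1), lam ^ m / m.factorial with hT
    set TL : ℕ → ℝ := fun n => ∑ m ∈ Finset.range (K + 1), lamn n ^ m / m.factorial with hTL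
    have hTL1 : ∀ n, 1 ≤ TL n := by
      intro n
      rw [hTL]
      have : (1 : ℝ) = ∑ m ∈ Finset.range 1, lamn n ^ m / m.factorial := by simp
      rw [this]
      refine Finset.sum_le_sum_of_subset_of_nonneg ?_ ?_
      · exact Finset.range_subset_range.2 (by omega)
      · intro m _ _
        exact div_nonneg (pow_nonneg (hlamn0 n) m) (by positivity)
    have hT1 : 1 ≤ T := by
      rw [hT]
      have : (1 : ℝ) = ∑ m ∈ Finset.range 1, lam ^ m / m.factorial := by simp
      rw [this]
      refine Finset.sum_le_sum_of_subset_of_nonneg ?_ ?_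
      · exact Finset.range_subset_range.2 (by omega)
      · intro m _ _
        positivity
    have hTLtend : Tendsto TL atTop (𝓝 T) := by
      rw [hTL, hT]
      refine tendsto_finset_sum _ fun m _ => ?_
      exact ((hlamn.pow m).div_const _)
    have hTpos : (0 : ℝ) < T := lt_of_lt_of_le one_pos hT1
    have hTLinv : Tendsto (fun n => (TL n)⁻¹) atTop (𝓝 T⁻¹) :=
      hTLtend.inv₀ (ne_of_gt hTpos)
    have hBsum : Tendsto (fun n => ∑ m ∈ Finset.range (K + 1),
        (Q n m - lamn n ^ m / m.factorial * Q n 0)) atTop (𝓝 0) := by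
      have := tendsto_finset_sum (Finset.range (K + 1)) fun m _ => hA m
      simpa using this
    -- identity
    have hid : ∀ n, TL n * Q n 0 = 1 - R K n - ∑ m ∈ Finset.range (K + 1),
        (Q n m - lamn n ^ m / m.factorial * Q n 0) := by
      intro n
      have h1 := hnorm K n
      rw [Finset.sum_sub_distrib]
      rw [hTL, Finset.sum_mul]
      linarith [h1]
    -- eventual bounds
    have hEv1 : ∀ᶠ n in atTop, |∑ m ∈ Finset.range (K + 1),
        (Q n m - lamn n ^ m / m.factorial * Q n 0)| < ε / 4 := by
      rw [Metric.tendsto_atTop] at hBsum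
      obtain ⟨N, hN⟩ := hBsum (ε / 4) (by linarith)
      exact eventually_atTop.2 ⟨N, fun n hn => by simpa [Real.dist_eq] using hN n hn⟩
    have hEv2 : ∀ᶠ n in atTop, lamn n ≤ lam + 1 := by
      rw [Metric.tendsto_atTop] at hlamn
      obtain ⟨N, hN⟩ := hlamn 1 one_pos
      refine eventually_atTop.2 ⟨N, fun n hn => ?_⟩
      have := hN n hn
      rw [Real.dist_eq] at this
      have := abs_sub_le_iff.1 (le_of_lt this)
      linarith [this.1]
    have hEv3 : ∀ᶠ n in atTop, |(TL n)⁻¹ - T⁻¹| < ε / 4 := by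
      rw [Metric.tendsto_atTop] at hTLinv
      obtain ⟨N, hN⟩ := hTLinv (ε / 4) (by linarith)
      exact eventually_atTop.2 ⟨N, fun n hn => by simpa [Real.dist_eq] using hN n hn⟩
    obtain ⟨N, hN⟩ := eventually_atTop.1 ((hEv1.and hEv2).and hEv3)
    refine ⟨N, fun n hn => ?_⟩
    obtain ⟨⟨h1, h2⟩, h3⟩ := hN n hn
    -- assemble
    have hQTL : |TL n * Q n 0 - 1| ≤ (lam + 1) / (K + 1 : ℝ) + ε / 4 := by
      rw [hid n]
      have hR1 : 0 ≤ R K n := hR0 K n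
      have hR2 : R K n ≤ (lam + 1) / ((K : ℝ) + 1) := by
        rw [le_div_iff₀ (by positivity : (0:ℝ) < (K : ℝ) + 1)]
        have := hRle K n
        nlinarith [h2]
      have habs := abs_sub_abs_le_abs_sub (1 - R K n - ∑ m ∈ Finset.range (K + 1),
        (Q n m - lamn n ^ m / m.factorial * Q n 0)) 0
      have hb := abs_le.1 (le_of_lt h1)
      rw [abs_sub_le_iff]
      constructor <;> [nlinarith [hb.1, hb.2, hR1, hR2]; nlinarith [hb.1, hb.2, hR1, hR2]]
    have hTLpos : 0 < TL n := lt_of_lt_of_le one_pos (hTL1 n)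
    have hQ1 : |Q n 0 - (TL n)⁻¹| ≤ (lam + 1) / ((K : ℝ) + 1) + ε / 4 := by
      have heq : Q n 0 - (TL n)⁻¹ = (TL n * Q n 0 - 1) / TL n := by
        field_simp
      rw [heq, abs_div, abs_of_pos hTLpos]
      exact le_trans (div_le_self (abs_nonneg _) (hTL1 n)) hQTL
    have hfinal : |Q n 0 - Real.exp (-lam)| < ε := by
      have hsplit : |Q n 0 - Real.exp (-lam)| ≤
          |Q n 0 - (TL n)⁻¹| + |(TL n)⁻¹ - T⁻¹| + |T⁻¹ - Real.exp (-lam)| := by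
        have := abs_sub_le (Q n 0) ((TL n)⁻¹) (Real.exp (-lam))
        have h2' := abs_sub_le ((TL n)⁻¹) T⁻¹ (Real.exp (-lam))
        linarith
      have hexpneg : |T⁻¹ - Real.exp (-lam)| < ε / 4 := by
        rw [Real.exp_neg]
        exact hK1
      have hKK : (lam + 1) / ((K : ℝ) + 1) < ε / 4 := hK2
      linarith [hQ1, h3]
    rw [Real.dist_eq]
    exact hfinal
  -- Step C
  intro m
  have hC : Tendsto (fun n => (Q n m - lamn n ^ m / m.factorial * Q n 0) +
      lamn n ^ m / m.factorial * Q n 0) atTop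
      (𝓝 (0 + lam ^ m / m.factorial * Real.exp (-lam))) := by
    exact (hA m).add (((hlamn.pow m).div_const _).mul hB)
  simp only [sub_add_cancel, zero_add] at hC
  convert hC using 2
  ring


section Glue

variable {Ω : Type} {mΩ : MeasurableSpace Ω} {n : ℕ}
  (μ : Measure Ω) [IsProbabilityMeasure μ]
  (X : Fin n → Ω → ℕ) (hX : ∀ i, Measurable (X i))
  (hind : iIndepFun X μ)
  (p : ℕ → ℝ) (hp0 : ∀ j, 0 ≤ p j) (hp1 : (∑' j, p j) = 1)
  (hdist : ∀ i j, μ {ω | X i ω = j} = ENNReal.ofReal (p j))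

include hX hind hp0 hp1 hdist

lemma recursion_real (k : ℕ) (hk : 1 ≤ k) :
    |(k : ℝ) * (μ {ω | (collOf fun i => X i ω).card = k}).toReal -
      (∑' j, p j ^ 2) *
        ((n.choose 2 : ℝ) * (μ {ω | (collOf fun i => X i ω).card = k - 1}).toReal)| ≤
      (n.choose 2 : ℝ) * ((4 * n : ℝ) * (∑' j, p j ^ 3)) +
      (n.choose 2 : ℝ) * ((∑' j, p j ^ 2) * ((4 * n : ℝ) * (∑' j, p j ^ 2))) := by
  obtain ⟨h1, h2⟩ := recursion_bound μ X hX hind p hp0 hp1 hdist k hk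
  have hs2nn : 0 ≤ ∑' j, p j ^ 2 := tsum_nonneg fun j => sq_nonneg _
  have hs3nn : 0 ≤ ∑' j, p j ^ 3 := tsum_nonneg fun j => pow_nonneg (hp0 j) 3
  have key := abs_toReal_sub_le (a := (k : ℝ≥0∞) * μ {ω | (collOf fun i => X i ω).card = k})
    (b := ENNReal.ofReal (∑' j, p j ^ 2) *
      (((pairsF n).card : ℝ≥0∞) * μ {ω | (collOf fun i => X i ω).card = k - 1}))
    (c := ((pairsF n).card : ℝ≥0∞) * ((4 * n : ℕ) * ENNReal.ofReal (∑' j, p j ^ 3)) +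
      ((pairsF n).card : ℝ≥0∞) * (ENNReal.ofReal (∑' j, p j ^ 2) *
        ((4 * n : ℕ) * ENNReal.ofReal (∑' j, p j ^ 2))))
    (by finiteness) (by finiteness) (by finiteness) h1 h2
  rw [ENNReal.toReal_mul, ENNReal.toReal_mul, ENNReal.toReal_mul, ENNReal.toReal_add
    (by finiteness) (by finiteness), ENNReal.toReal_mul, ENNReal.toReal_mul,
    ENNReal.toReal_mul, ENNReal.toReal_mul, ENNReal.toReal_mul] at key
  simp only [ENNReal.toReal_natCast, ENNReal.toReal_ofReal hs2nn,
    ENNReal.toReal_ofReal hs3nn, card_pairsF] at key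
  convert key using 3 <;> push_cast <;> ring

lemma markov_real (K : ℕ) :
    ((K : ℝ) + 1) * (μ {ω | K + 1 ≤ (collOf fun i => X i ω).card}).toReal ≤
      (n.choose 2 : ℝ) * (∑' j, p j ^ 2) := by
  have h := markov_bound μ X hX p K hind hp0 hp1 hdist
  have hs2nn : 0 ≤ ∑' j, p j ^ 2 := tsum_nonneg fun j => sq_nonneg _
  have := ENNReal.toReal_mono (by finiteness) h
  rw [ENNReal.toReal_mul, ENNReal.toReal_mul, ENNReal.toReal_ofReal hs2nn,
    ENNReal.toReal_natCast, card_pairsF] at this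
  rw [ENNReal.toReal_add (by finiteness) (by finiteness)] at this
  simpa [ENNReal.toReal_natCast] using this

lemma WD_real (k : ℕ) :
    |(μ {ω | n - (Finset.univ.image fun i => X i ω).card = k}).toReal -
      (μ {ω | (collOf fun i => X i ω).card = k}).toReal| ≤
      (n ^ 3 : ℝ) * (∑' j, p j ^ 3) := by
  obtain ⟨h1, h2⟩ := W_vs_D_bound μ X hX hind p hp0 hp1 hdist k
  have hs3nn : 0 ≤ ∑' j, p j ^ 3 := tsum_nonneg fun j => pow_nonneg (hp0 j) 3
  have key := abs_toReal_sub_le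
    (a := μ {ω | n - (Finset.univ.image fun i => X i ω).card = k})
    (b := μ {ω | (collOf fun i => X i ω).card = k})
    (c := (n ^ 3 : ℕ) * ENNReal.ofReal (∑' j, p j ^ 3))
    (by finiteness) (by finiteness) (by finiteness) h1 h2
  rw [ENNReal.toReal_mul, ENNReal.toReal_natCast, ENNReal.toReal_ofReal hs3nn] at key
  convert key using 2
  push_cast
  ring

omit hind hp0 hp1 hdist in
lemma norm_real (K : ℕ) :
    (∑ m ∈ Finset.range (K + 1), (μ {ω | (collOf fun i => X i ω).card = m}).toReal) +
      (μ {ω | K + 1 ≤ (collOf fun i => X i ω).card}).toReal = 1 := by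
  classical
  have hsetA : {ω | (collOf fun i => X i ω).card ≤ K} =
      ⋃ m ∈ Finset.range (K + 1), {ω | (collOf fun i => X i ω).card = m} := by
    ext ω
    simp only [Set.mem_setOf_eq, Set.mem_iUnion, Finset.mem_range]
    constructor
    · intro h
      exact ⟨_, by omega, rfl⟩
    · rintro ⟨m, hm, he⟩
      have he' : (collOf fun i => X i ω).card = m := he
      omega
  have hdisj : Set.PairwiseDisjoint ↑(Finset.range (K + 1))
      (fun m => {ω | (collOf fun i => X i ω).card = m}) := by
    intro a _ b _ hab
    apply Set.disjoint_left.2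
    intro ω h1 h2
    have h1' : (collOf fun i => X i ω).card = a := h1
    have h2' : (collOf fun i => X i ω).card = b := h2
    exact hab (h1' ▸ h2' ▸ rfl)
  have hA : μ {ω | (collOf fun i => X i ω).card ≤ K} =
      ∑ m ∈ Finset.range (K + 1), μ {ω | (collOf fun i => X i ω).card = m} := by
    rw [hsetA, measure_biUnion_finset hdisj
      (fun m _ => measEvent hX fun f => (collOf f).card = m)]
  have hcompl : {ω | K + 1 ≤ (collOf fun i => X i ω).card} =
      {ω | (collOf fun i => X i ω).card ≤ K}ᶜ := by
    ext ω
    simp only [Set.mem_setOf_eq, Set.mem_compl_iff, not_le]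
    omega
  have hsum := measure_add_measure_compl (μ := μ)
    (measEvent hX fun f => (collOf f).card ≤ K)
  rw [hA] at hsum
  have := congrArg ENNReal.toReal hsum
  rw [ENNReal.toReal_add (ENNReal.sum_ne_top.2 fun m _ => measure_ne_top μ _)
    (measure_ne_top μ _), ENNReal.toReal_sum
    (fun m _ => measure_ne_top μ _), measure_univ, ENNReal.toReal_one] at this
  rw [hcompl]
  exact this

end Glue

end PoiAux

open PoiAux

/-- Theorem 8.2: if `(1/2)∑_j (p^{(n)}_j n)² → λ < ∞` and
`sup_j p^{(n)}_j n → 0`, then `n − Z_n` converges in distribution to `Po(λ)`,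
i.e. `ℙ(n − Z_n = k) → e^{−λ} λ^k / k!` for every `k ∈ ℕ`. -/
theorem poisson_limit_n_sub_Z
    (Ω : ℕ → Type) (mΩ : ∀ n, MeasurableSpace (Ω n))
    (μ : ∀ n, Measure (Ω n)) (hμ : ∀ n, IsProbabilityMeasure (μ n))
    (p : ℕ → ℕ → ℝ) (hp0 : ∀ n j, 0 ≤ p n j) (hp1 : ∀ n, (∑' j, p n j) = 1)
    (X : ∀ n, Fin n → Ω n → ℕ)
    (hmeas : ∀ n i, Measurable (X n i))
    (hindep : ∀ n, iIndepFun (X n) (μ n))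
    (hdist : ∀ n i j, μ n {ω | X n i ω = j} = ENNReal.ofReal (p n j))
    (lam : ℝ) (hlam : 0 ≤ lam)
    (hsum : Tendsto (fun n => (1 / 2 : ℝ) * ∑' j, (p n j * n) ^ 2) atTop (𝓝 lam))
    (hsup : Tendsto (fun n => ⨆ j, p n j * n) atTop (𝓝 0)) :
    ∀ k : ℕ,
      Tendsto
        (fun n => (μ n {ω | n - (Finset.univ.image (fun i => X n i ω)).card = k}).toReal)
        atTop (𝓝 (Real.exp (-lam) * lam ^ k / k.factorial)) := by
  classical
  intro k
  set S2 : ℕ → ℝ := fun n => ∑' j, p n j ^ 2 with hS2def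
  set S3 : ℕ → ℝ := fun n => ∑' j, p n j ^ 3 with hS3def
  set u : ℕ → ℝ := fun n => ⨆ j, p n j * n with hudef
  set lamn : ℕ → ℝ := fun n => (n.choose 2 : ℝ) * S2 n with hlamndef
  set Q : ℕ → ℕ → ℝ :=
    fun n m => ((μ n) {ω | (collOf fun i => X n i ω).card = m}).toReal with hQdef
  set R : ℕ → ℕ → ℝ :=
    fun K n => ((μ n) {ω | K + 1 ≤ (collOf fun i => X n i ω).card}).toReal with hRdef
  have hS2nn : ∀ n, 0 ≤ S2 n := fun n => tsum_nonneg fun j => sq_nonneg _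
  have hS3nn : ∀ n, 0 ≤ S3 n := fun n => tsum_nonneg fun j => pow_nonneg (hp0 n j) 3
  have hsummp : ∀ n, Summable (p n) := fun n => summable_p (p n) (hp0 n) (hp1 n)
  have hple1 : ∀ n j, p n j ≤ 1 := fun n j => p_le_one (p n) (hp0 n) (hp1 n) j
  have hsumm2 : ∀ n, Summable (fun j => p n j ^ 2) :=
    fun n => summable_p_sq (p n) (hp0 n) (hp1 n)
  have hsumm3 : ∀ n, Summable (fun j => p n j ^ 3) :=
    fun n => summable_p_cube (p n) (hp0 n) (hp1 n)
  have hbdd : ∀ n, BddAbove (Set.range fun j => p n j * n) := by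
    intro n
    refine ⟨(n : ℝ), ?_⟩
    rintro x ⟨j, rfl⟩
    calc p n j * n ≤ 1 * n := by
          exact mul_le_mul_of_nonneg_right (hple1 n j) (Nat.cast_nonneg n)
      _ = (n : ℝ) := one_mul _
  have hu_ub : ∀ n j, p n j * n ≤ u n := fun n j => le_ciSup (hbdd n) j
  have hu0 : ∀ n, 0 ≤ u n :=
    fun n => le_trans (mul_nonneg (hp0 n 0) (Nat.cast_nonneg n)) (hu_ub n 0)
  have husup : Tendsto u atTop (𝓝 0) := hsup
  -- e3 : n * S2 n ≤ u n
  have e3 : ∀ n : ℕ, (n : ℝ) * S2 n ≤ u n := by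
    intro n
    have h1 : (n : ℝ) * S2 n = ∑' j, p n j * (p n j * n) := by
      rw [hS2def]
      simp only
      rw [← tsum_mul_left]
      exact tsum_congr fun j => by ring
    have h2 : (∑' j, p n j * u n) = u n := by
      rw [tsum_mul_right, hp1 n, one_mul]
    rw [h1, ← h2]
    refine Summable.tsum_le_tsum (fun j => ?_) ?_ ?_
    · exact mul_le_mul_of_nonneg_left (hu_ub n j) (hp0 n j)
    · exact Summable.congr ((hsumm2 n).mul_right (n : ℝ)) fun j => by ring
    · exact (hsummp n).mul_right _
  -- e2 : n^3 * S3 n ≤ u n * (n^2 * S2 n)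
  have e2 : ∀ n : ℕ, (n : ℝ) ^ 3 * S3 n ≤ u n * ((n : ℝ) ^ 2 * S2 n) := by
    intro n
    have h1 : (n : ℝ) ^ 3 * S3 n = ∑' j, (p n j * n) ^ 3 := by
      rw [hS3def]
      simp only
      rw [← tsum_mul_left]
      exact tsum_congr fun j => by ring
    have h2 : u n * ((n : ℝ) ^ 2 * S2 n) = ∑' j, u n * (p n j * n) ^ 2 := by
      rw [hS2def]
      simp only
      rw [← tsum_mul_left, ← tsum_mul_left]
      exact tsum_congr fun j => by ring
    rw [h1, h2]
    refine Summable.tsum_le_tsum (fun j => ?_) ?_ ?_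
    · calc (p n j * n) ^ 3 = (p n j * n) * (p n j * n) ^ 2 := by ring
        _ ≤ u n * (p n j * n) ^ 2 := by
            exact mul_le_mul_of_nonneg_right (hu_ub n j) (sq_nonneg _)
    · exact Summable.congr ((hsumm3 n).mul_right ((n : ℝ) ^ 3)) fun j => by ring
    · exact Summable.congr (((hsumm2 n).mul_right ((n : ℝ) ^ 2)).mul_left (u n))
        fun j => by ring
  -- F1 : n^2 * S2 n → 2 lam
  have hn2S2 : Tendsto (fun n : ℕ => (n : ℝ) ^ 2 * S2 n) atTop (𝓝 (2 * lam)) := by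
    have heq : ∀ n : ℕ, (1 / 2 : ℝ) * ∑' j, (p n j * n) ^ 2 =
        (1 / 2) * ((n : ℝ) ^ 2 * S2 n) := by
      intro n
      congr 1
      rw [hS2def]
      simp only
      rw [← tsum_mul_left]
      exact tsum_congr fun j => by ring
    have h := hsum.congr (fun n => heq n)
    have h2 := h.const_mul (2 : ℝ)
    have heq2 : (fun n : ℕ => (2 : ℝ) * ((1 / 2) * ((n : ℝ) ^ 2 * S2 n))) =
        fun n : ℕ => (n : ℝ) ^ 2 * S2 n := by
      funext n
      ring
    rw [heq2] at h2
    exact h2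
  have hnS2 : Tendsto (fun n : ℕ => (n : ℝ) * S2 n) atTop (𝓝 0) :=
    squeeze_zero (fun n => mul_nonneg (Nat.cast_nonneg n) (hS2nn n)) e3 husup
  have hn3S3 : Tendsto (fun n : ℕ => (n : ℝ) ^ 3 * S3 n) atTop (𝓝 0) := by
    have hg : Tendsto (fun n : ℕ => u n * ((n : ℝ) ^ 2 * S2 n)) atTop (𝓝 (0 * (2 * lam))) :=
      husup.mul hn2S2
    rw [zero_mul] at hg
    exact squeeze_zero (fun n => mul_nonneg (by positivity) (hS3nn n)) e2 hg
  -- lamn → lam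
  have hlamn : Tendsto lamn atTop (𝓝 lam) := by
    have h1 : Tendsto (fun n : ℕ => (1 / 2 : ℝ) * ((n : ℝ) ^ 2 * S2 n) -
        (1 / 2) * ((n : ℝ) * S2 n)) atTop (𝓝 ((1 / 2) * (2 * lam) - (1 / 2) * 0)) :=
      (hn2S2.const_mul _).sub (hnS2.const_mul _)
    have h2 : ((1 / 2 : ℝ) * (2 * lam) - (1 / 2) * 0) = lam := by ring
    rw [h2] at h1
    refine h1.congr fun n => ?_
    rw [hlamndef]
    simp only
    rw [Nat.cast_choose_two]
    ring
  have hlamn0 : ∀ n, 0 ≤ lamn n :=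
    fun n => mul_nonneg (Nat.cast_nonneg _) (hS2nn n)
  -- Error term
  set Err : ℕ → ℝ := fun n => (n.choose 2 : ℝ) * ((4 * n : ℝ) * S3 n) +
    (n.choose 2 : ℝ) * (S2 n * ((4 * n : ℝ) * S2 n)) with hErrdef
  have hErr0 : ∀ n, 0 ≤ Err n := by
    intro n
    have t1 : (0:ℝ) ≤ (n.choose 2 : ℝ) * ((4 * n : ℝ) * S3 n) := by
      refine mul_nonneg (Nat.cast_nonneg _) (mul_nonneg (by positivity) (hS3nn n))
    have t2 : (0:ℝ) ≤ (n.choose 2 : ℝ) * (S2 n * ((4 * n : ℝ) * S2 n)) := by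
      refine mul_nonneg (Nat.cast_nonneg _)
        (mul_nonneg (hS2nn n) (mul_nonneg (by positivity) (hS2nn n)))
    rw [hErrdef]
    exact add_nonneg t1 t2
  have hchoose_le : ∀ n : ℕ, (n.choose 2 : ℝ) ≤ (n : ℝ) ^ 2 / 2 := by
    intro n
    rw [Nat.cast_choose_two]
    have : (0:ℝ) ≤ (n:ℝ) := Nat.cast_nonneg n
    nlinarith
  have hErrle : ∀ n : ℕ, Err n ≤ 2 * ((n : ℝ) ^ 3 * S3 n) +
      2 * (((n : ℝ) * S2 n) * ((n : ℝ) ^ 2 * S2 n)) := by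
    intro n
    have hn0 : (0:ℝ) ≤ (n:ℝ) := Nat.cast_nonneg n
    have t1 : (n.choose 2 : ℝ) * ((4 * n : ℝ) * S3 n) ≤ 2 * ((n : ℝ) ^ 3 * S3 n) := by
      have := mul_le_mul_of_nonneg_right (hchoose_le n)
        (mul_nonneg (by positivity) (hS3nn n) : (0:ℝ) ≤ (4 * n : ℝ) * S3 n)
      calc (n.choose 2 : ℝ) * ((4 * n : ℝ) * S3 n) ≤
          ((n : ℝ) ^ 2 / 2) * ((4 * n : ℝ) * S3 n) := this
        _ = 2 * ((n : ℝ) ^ 3 * S3 n) := by ring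
    have t2 : (n.choose 2 : ℝ) * (S2 n * ((4 * n : ℝ) * S2 n)) ≤
        2 * (((n : ℝ) * S2 n) * ((n : ℝ) ^ 2 * S2 n)) := by
      have hs : (0:ℝ) ≤ S2 n * ((4 * n : ℝ) * S2 n) :=
        mul_nonneg (hS2nn n) (mul_nonneg (by positivity) (hS2nn n))
      have := mul_le_mul_of_nonneg_right (hchoose_le n) hs
      calc (n.choose 2 : ℝ) * (S2 n * ((4 * n : ℝ) * S2 n)) ≤
          ((n : ℝ) ^ 2 / 2) * (S2 n * ((4 * n : ℝ) * S2 n)) := this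
        _ = 2 * (((n : ℝ) * S2 n) * ((n : ℝ) ^ 2 * S2 n)) := by ring
    rw [hErrdef]
    exact add_le_add t1 t2
  have hErrtend : Tendsto Err atTop (𝓝 0) := by
    have hg : Tendsto (fun n : ℕ => 2 * ((n : ℝ) ^ 3 * S3 n) +
        2 * (((n : ℝ) * S2 n) * ((n : ℝ) ^ 2 * S2 n))) atTop
        (𝓝 (2 * 0 + 2 * (0 * (2 * lam)))) :=
      (hn3S3.const_mul _).add ((hnS2.mul hn2S2).const_mul _)
    have : (2 * (0:ℝ) + 2 * (0 * (2 * lam))) = 0 := by ring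
    rw [this] at hg
    exact squeeze_zero hErr0 hErrle hg
  -- key_limit hypotheses
  have hQ0 : ∀ n m, 0 ≤ Q n m := fun n m => ENNReal.toReal_nonneg
  have hrec : ∀ m : ℕ, 1 ≤ m →
      Tendsto (fun n => (m : ℝ) * Q n m - lamn n * Q n (m - 1)) atTop (𝓝 0) := by
    intro m hm
    refine squeeze_zero_norm (fun n => ?_) hErrtend
    haveI := hμ n
    have h := recursion_real (μ n) (X n) (hmeas n) (hindep n) (p n)
      (hp0 n) (hp1 n) (hdist n) m hm
    rw [Real.norm_eq_abs]
    have heq : (m : ℝ) * Q n m - lamn n * Q n (m - 1) =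
        (m : ℝ) * ((μ n) {ω | (collOf fun i => X n i ω).card = m}).toReal -
          S2 n * ((n.choose 2 : ℝ) *
            ((μ n) {ω | (collOf fun i => X n i ω).card = m - 1}).toReal) := by
      rw [hQdef, hlamndef]
      simp only
      ring
    rw [heq]
    exact le_trans h (le_of_eq rfl)
  have hR0 : ∀ K n, 0 ≤ R K n := fun K n => ENNReal.toReal_nonneg
  have hRle : ∀ K n : ℕ, ((K : ℝ) + 1) * R K n ≤ lamn n := by
    intro K n
    haveI := hμ n
    exact markov_real (μ n) (X n) (hmeas n) (hindep n) (p n) (hp0 n) (hp1 n)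
      (hdist n) K
  have hnorm : ∀ K n : ℕ, (∑ m ∈ Finset.range (K + 1), Q n m) + R K n = 1 := by
    intro K n
    haveI := hμ n
    exact norm_real (μ n) (X n) (hmeas n) K
  have hQlim := key_limit Q R lamn lam hlam hlamn hlamn0 hQ0 hrec hR0 hRle hnorm
  -- final: compare W with Q
  have hWQ : Tendsto (fun n =>
      ((μ n) {ω | n - (Finset.univ.image fun i => X n i ω).card = k}).toReal - Q n k)
      atTop (𝓝 0) := by
    refine squeeze_zero_norm (fun n => ?_) hn3S3
    haveI := hμ n
    have h := WD_real (μ n) (X n) (hmeas n) (hindep n) (p n) (hp0 n) (hp1 n)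
      (hdist n) k
    rw [Real.norm_eq_abs]
    exact le_trans h (le_of_eq (by push_cast; ring))
  have hfin := hWQ.add (hQlim k)
  rw [zero_add] at hfin
  refine hfin.congr fun n => ?_
  ring
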